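/- (Matrix case over ℂ.) Let Ω ⊆ [n₁]×[n₂] and Q_{ij} ≠ 0 complex for (i,j) ∈ Ω. If the homogeneous system x_i + y_j = 0, (i,j) ∈ Ω, with x₁ = 0 has only the zero real solution, then a complex rank-one completion Q_{ij} = a_i b_j with a₁ = 1, if it exists, is unique. -/

import Mathlib

private lemma one_ne_neg_one_C : (1 : ℂ) ≠ -1 := by
  intro h
  have := congrArg Complex.re h
  norm_num at this

/-- Matrix case over `ℂ`: nondegeneracy of the real homogeneous system implies
there is at most one normalized complex rank-one completion. -/
theorem matrix_complex_uniqueness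
    (n₁ n₂ : ℕ)
    (Ω : Finset (Fin (n₁ + 1) × Fin (n₂ + 1)))
    (Q : Fin (n₁ + 1) × Fin (n₂ + 1) → ℂ)
    (hQ : ∀ t ∈ Ω, Q t ≠ 0)
    (hA : ∀ x : Fin (n₁ + 1) → ℝ, ∀ y : Fin (n₂ + 1) → ℝ,
      x 0 = 0 → (∀ t ∈ Ω, x t.1 + y t.2 = 0) →
      ∀ t ∈ Ω, x t.1 = 0 ∧ y t.2 = 0) :
    ∀ a a' : Fin (n₁ + 1) → ℂ, ∀ b b' : Fin (n₂ + 1) → ℂ,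
      a 0 = 1 → (∀ t ∈ Ω, Q t = a t.1 * b t.2) →
      a' 0 = 1 → (∀ t ∈ Ω, Q t = a' t.1 * b' t.2) →
      ∀ t ∈ Ω, a' t.1 = a t.1 ∧ b' t.2 = b t.2 := by
  intro a a' b b' ha0 hab ha0' hab'
  set r : Fin (n₁ + 1) → ℂ := fun i => a' i / a i with hr
  set s : Fin (n₂ + 1) → ℂ := fun j => b' j / b j with hs
  have ha_ne : ∀ t ∈ Ω, a t.1 ≠ 0 := fun t ht h => hQ t ht (by rw [hab t ht, h, zero_mul])
  have hb_ne : ∀ t ∈ Ω, b t.2 ≠ 0 := fun t ht h => hQ t ht (by rw [hab t ht, h, mul_zero])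
  have hrs : ∀ t ∈ Ω, r t.1 * s t.2 = 1 := by
    intro t ht
    have h1 : r t.1 * s t.2 = (a' t.1 * b' t.2) / (a t.1 * b t.2) := div_mul_div_comm _ _ _ _
    rw [h1, ← hab' t ht, hab t ht, ← hab t ht, div_self (hQ t ht)]
  have hr0 : r 0 = 1 := by
    show a' 0 / a 0 = 1
    rw [ha0, ha0', div_one]
  have hr_ne : ∀ t ∈ Ω, r t.1 ≠ 0 := by
    intro t ht h
    have h2 := hrs t ht; rw [h, zero_mul] at h2; exact one_ne_zero h2.symm
  have hs_ne : ∀ t ∈ Ω, s t.2 ≠ 0 := by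
    intro t ht h
    have h2 := hrs t ht; rw [h, mul_zero] at h2; exact one_ne_zero h2.symm
  -- Step 1: moduli are 1 on Ω
  have step1 := hA (fun i => Real.log ‖r i‖) (fun j => Real.log ‖s j‖)
    (by simp [hr0]) (by
      intro t ht
      show Real.log ‖r t.1‖ + Real.log ‖s t.2‖ = 0
      have h1 : ‖r t.1‖ ≠ 0 := by simpa using hr_ne t ht
      rw [← Real.log_mul h1 (by simpa using hs_ne t ht), ← norm_mul, hrs t ht]
      simp)
  have habs1 : ∀ t ∈ Ω, ‖r t.1‖ = 1 := by
    intro t ht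
    have h : Real.log ‖r t.1‖ = 0 := (step1 t ht).1
    have hpos : (0:ℝ) < ‖r t.1‖ := by
      simpa [norm_pos_iff] using hr_ne t ht
    have h2 := Real.exp_log hpos
    rw [h] at h2; simpa using h2.symm
  -- s = conj r on Ω
  have hconj : ∀ t ∈ Ω, s t.2 = starRingEnd ℂ (r t.1) := by
    intro t ht
    have h1 : s t.2 = (r t.1)⁻¹ := eq_inv_of_mul_eq_one_left (by rw [mul_comm]; exact hrs t ht)
    rw [h1, Complex.inv_def, Complex.normSq_eq_norm_sq, habs1 t ht]
    simp
  -- Step 2: imaginary parts are 0 on Ω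
  have step2 := hA (fun i => (r i).im) (fun j => (s j).im)
    (by simp [hr0]) (by
      intro t ht
      show (r t.1).im + (s t.2).im = 0
      rw [hconj t ht]
      simp)
  -- so r = ±1 on Ω
  have hpm : ∀ t ∈ Ω, r t.1 = 1 ∨ r t.1 = -1 := by
    intro t ht
    have him : (r t.1).im = 0 := (step2 t ht).1
    have habs := habs1 t ht
    have hsq : (r t.1).re ^ 2 = 1 := by
      have h2 := Complex.sq_norm (r t.1)
      rw [habs, Complex.normSq_apply, him] at h2
      nlinarith
    rcases mul_eq_zero.mp (show ((r t.1).re - 1) * ((r t.1).re + 1) = 0 by nlinarith) with h | h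
    · left
      apply Complex.ext <;> simp [him] <;> linarith
    · right
      apply Complex.ext <;> simp [him] <;> linarith
  have hspm : ∀ t ∈ Ω, (r t.1 = 1 → s t.2 = 1) ∧ (r t.1 = -1 → s t.2 = -1) := by
    intro t ht
    have h2 := hrs t ht
    constructor <;> intro h <;> rw [h] at h2
    · rwa [one_mul] at h2
    · linear_combination -h2
  -- Step 3: rule out -1
  have step3 := hA (fun i => if r i = -1 then (1:ℝ) else 0)
      (fun j => if s j = -1 then (-1:ℝ) else 0)
    (by
      show (if r 0 = -1 then (1:ℝ) else 0) = 0
      rw [if_neg (by rw [hr0]; exact one_ne_neg_one_C)])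
    (by
      intro t ht
      show (if r t.1 = -1 then (1:ℝ) else 0) + (if s t.2 = -1 then (-1:ℝ) else 0) = 0
      rcases hpm t ht with h | h
      · have hs1 : s t.2 = 1 := (hspm t ht).1 h
        rw [if_neg (by rw [h]; exact one_ne_neg_one_C),
            if_neg (by rw [hs1]; exact one_ne_neg_one_C), add_zero]
      · have hs1 : s t.2 = -1 := (hspm t ht).2 h
        rw [if_pos h, if_pos hs1]; ring)
  intro t ht
  have hx : (if r t.1 = -1 then (1:ℝ) else 0) = 0 := (step3 t ht).1
  have hy : (if s t.2 = -1 then (-1:ℝ) else 0) = 0 := (step3 t ht).2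
  have hrne : r t.1 ≠ -1 := by
    intro h; rw [if_pos h] at hx; norm_num at hx
  have hr1 : r t.1 = 1 := (hpm t ht).resolve_right hrne
  have hs1 : s t.2 = 1 := (hspm t ht).1 hr1
  constructor
  · exact (div_eq_one_iff_eq (ha_ne t ht)).mp hr1
  · exact (div_eq_one_iff_eq (hb_ne t ht)).mp hs1
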